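/- Let Λ be a free ℤ-module of finite rank, λ a primitive element of Λ, and μ ∈ Λ. Then for any integer r > 0, r divides the class [μ] in Λ/ℤλ if and only if r divides λ ∧ μ in Λ ∧ Λ. -/

import Mathlib

/-- An element of a `ℤ`-module is primitive if it is not a non-unit integer
multiple of another element. -/
def IsPrimitiveElt {M : Type*} [AddCommGroup M] [Module ℤ M] (x : M) : Prop :=
  ∀ (n : ℤ) (y : M), x = n • y → IsUnit n

/-- A primitive element of a finite free `ℤ`-module admits a dual functional. -/
lemma exists_dual_eq_one (Λ : Type*) [AddCommGroup Λ] [Module ℤ Λ]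
    [Module.Free ℤ Λ] [Module.Finite ℤ Λ] (l : Λ) (hl : IsPrimitiveElt l) :
    ∃ f : Λ →ₗ[ℤ] ℤ, f l = 1 := by
  classical
  let b := Module.Free.chooseBasis ℤ Λ
  set I : Ideal ℤ := Submodule.span ℤ (Set.range fun i => b.repr l i) with hI
  obtain ⟨d, hd⟩ := (IsPrincipalIdealRing.principal I).principal
  have hdvd : ∀ i, d ∣ b.repr l i := by
    intro i
    have : b.repr l i ∈ I := Submodule.subset_span ⟨i, rfl⟩
    rw [hd] at this
    exact Ideal.mem_span_singleton.mp this
  have hld : l = d • (b.repr.symm ((b.repr l).mapRange (· / d) (by simp))) := by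
    rw [← Int.cast_smul_eq_zsmul ℤ, Int.cast_id]
    apply b.repr.injective
    simp only [map_smul, LinearEquiv.apply_symm_apply]
    ext i
    simp only [Finsupp.smul_apply, Finsupp.mapRange_apply, smul_eq_mul]
    exact (Int.mul_ediv_cancel' (hdvd i)).symm
  have hu : IsUnit d := hl d _ hld
  have h1 : (1 : ℤ) ∈ I := by
    rw [hd]
    have hdd : d ∣ (1 : ℤ) := hu.dvd
    obtain ⟨c, hc⟩ := hdd
    exact Submodule.mem_span_singleton.mpr ⟨c, by rw [smul_eq_mul, mul_comm, ← hc]⟩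
  rw [hI, Submodule.mem_span_range_iff_exists_fun] at h1
  obtain ⟨c, hc⟩ := h1
  refine ⟨b.constr (S := ℤ) c, ?_⟩
  simpa [Module.Basis.constr_apply_fintype, Module.Basis.equivFun_apply, mul_comm] using hc

/-- For a free `ℤ`-module `Λ` of finite rank, a primitive `λ ∈ Λ`,
`μ ∈ Λ` and an integer `r > 0`: `r` divides the class of `μ` in `Λ/ℤλ` iff
`r` divides `λ ∧ μ` in the exterior square of `Λ`. -/
theorem content_quotient_iff_content_wedge
    (Λ : Type*) [AddCommGroup Λ] [Module ℤ Λ] [Module.Free ℤ Λ] [Module.Finite ℤ Λ]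
    (l m : Λ) (hl : IsPrimitiveElt l) (r : ℤ) (hr : 0 < r) :
    (∃ y : Λ ⧸ Submodule.span ℤ {l},
        Submodule.Quotient.mk (p := Submodule.span ℤ {l}) m = r • y) ↔
    (∃ ω : ExteriorAlgebra ℤ Λ,
        ExteriorAlgebra.ι ℤ l * ExteriorAlgebra.ι ℤ m = r • ω) := by
  classical
  constructor
  · rintro ⟨y, hy⟩
    obtain ⟨y', rfl⟩ := Submodule.Quotient.mk_surjective _ y
    rw [← Int.cast_smul_eq_zsmul ℤ, Int.cast_id, ← Submodule.Quotient.mk_smul,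
      Submodule.Quotient.eq] at hy
    obtain ⟨c, hc⟩ := Submodule.mem_span_singleton.mp hy
    have hm := sub_eq_iff_eq_add'.mp hc.symm
    rw [← Int.cast_smul_eq_zsmul ℤ, Int.cast_id] at hm
    refine ⟨ExteriorAlgebra.ι ℤ l * ExteriorAlgebra.ι ℤ y', ?_⟩
    rw [← Int.cast_smul_eq_zsmul ℤ, Int.cast_id]
    rw [hm, map_add, LinearMap.map_smul, LinearMap.map_smul, mul_add, mul_smul_comm,
      mul_smul_comm, ExteriorAlgebra.ι_sq_zero]
    exact (congrArg (_ + ·) (smul_zero c)).trans (add_zero _)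
  · rintro ⟨ω, hω⟩
    rw [← Int.cast_smul_eq_zsmul ℤ, Int.cast_id] at hω
    obtain ⟨f, hf⟩ := exists_dual_eq_one Λ l hl
    set p : Submodule ℤ Λ := Submodule.span ℤ {l} with hp
    let q : Λ →ₗ[ℤ] Λ ⧸ p :=
      { toFun := p.mkQ
        map_add' := map_add _
        map_smul' := fun c x => by
          rw [RingHom.id_apply]
          exact (congrArg p.mkQ.toAddMonoidHom (int_smul_eq_zsmul _ c x)).trans
            (map_zsmul p.mkQ.toAddMonoidHom c x) }
    have hql : q l = 0 :=
      (Submodule.Quotient.mk_eq_zero p).mpr (Submodule.mem_span_singleton_self l)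
    -- the bilinear alternating map (x, y) ↦ f x • [y] - f y • [x]
    let B : MultilinearMap ℤ (fun _ : Fin 2 => Λ) (Λ ⧸ p) :=
      { toFun := fun v => f (v 0) • q (v 1) - f (v 1) • q (v 0)
        map_update_add' := by
          intro _ v i x y
          fin_cases i <;>
            · simp [Function.update_apply]
              module
        map_update_smul' := by
          intro _ v i c x
          fin_cases i <;>
            · simp [Function.update_apply]
              module }
    let A : Λ [⋀^Fin 2]→ₗ[ℤ] (Λ ⧸ p) :=
      { B with
        map_eq_zero_of_eq' := by
          intro v i j hij hne
          have h01 : v 0 = v 1 := by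
            fin_cases i <;> fin_cases j <;> simp_all
          show f (v 0) • q (v 1) - f (v 1) • q (v 0) = 0
          rw [h01, sub_self] }
    let F : ∀ i, Λ [⋀^Fin i]→ₗ[ℤ] (Λ ⧸ p) := fun i =>
      match i with
      | 2 => A
      | _ => 0
    let g := ExteriorAlgebra.liftAlternating (R := ℤ) (M := Λ) (N := Λ ⧸ p) F
    have hg : g (ExteriorAlgebra.ι ℤ l * ExteriorAlgebra.ι ℤ m)
        = Submodule.Quotient.mk (p := p) m := by
      show ExteriorAlgebra.liftAlternating F _ = _
      rw [ExteriorAlgebra.liftAlternating_ι_mul, ExteriorAlgebra.liftAlternating_ι]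
      show ((F 2).curryLeft l) ![m] = _
      rw [AlternatingMap.curryLeft_apply_apply]
      show f l • q m - f m • q l = q m
      rw [hf, hql]
      module
    refine ⟨g ω, ?_⟩
    rw [← Int.cast_smul_eq_zsmul ℤ, Int.cast_id, ← hg, hω]
    exact LinearMap.map_smul _ _ ω
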